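/- For every s with 0 < s ≤ 2, the measure κ_s is invariant under the point reflection (x,y) ↦ (1−x, 1−y) and under the transposition (x,y) ↦ (y,x); that is, the pushforwards of κ_s under these two maps both equal κ_s. (Symmetry of the limiting configuration measure, stated after Theorem 1.3) -/

import Mathlib

open MeasureTheory

/-- `L_x^-(s) = x + s - 2√(sx)`. -/
noncomputable def Lminus (x s : ℝ) : ℝ := x + s - 2 * Real.sqrt (s * x)

/-- `L_x^+(s) = x - s + 2√(s(1-x))`. -/
noncomputable def Lplus (x s : ℝ) : ℝ := x - s + 2 * Real.sqrt (s * (1 - x))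

/-- `W_s^- = (1 - √(2s - s²))/2`. -/
noncomputable def Wminus (s : ℝ) : ℝ := (1 - Real.sqrt (2 * s - s ^ 2)) / 2

/-- `W_s^+ = (1 + √(2s - s²))/2`. -/
noncomputable def Wplus (s : ℝ) : ℝ := (1 + Real.sqrt (2 * s - s ^ 2)) / 2

/-- The measure `w(x) δ_{y = g(x)} dx` on `ℝ²`, concentrated on the curve
`{(x, g(x)) : x ∈ [0, 1]}`, assigning measure `∫_A w(x) dx` to `A × ℝ` for Borel
`A ⊆ [0, 1]`. -/
noncomputable def curveMeasure (g w : ℝ → ℝ) : Measure (ℝ × ℝ) :=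
  Measure.map (fun x => (x, g x))
    ((volume.restrict (Set.Icc (0 : ℝ) 1)).withDensity fun x => ENNReal.ofReal (w x))

open Classical in
/-- The limiting configuration measure `κ_s` of Theorem 1.2. -/
noncomputable def kappa (s : ℝ) : Measure (ℝ × ℝ) :=
  ((volume : Measure (ℝ × ℝ)).withDensity fun p =>
      ENNReal.ofReal
        (if Lminus p.1 s < p.2 ∧ p.2 < Lplus p.1 s ∧ p.1 - s < p.2 ∧ p.2 < p.1 + s
         then 1 / (2 * s) else 0))
  + curveMeasure (fun x => 1 - x)
      (fun x => if 1 < s ∧ ¬(Wminus s < x ∧ x < Wplus s) then 1 else 0)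
  + curveMeasure (fun x => Lminus x s)
      (fun x =>
        ((if s ≤ 1 ∧ x < s then 1 else 0)
          + (if 1 < s ∧ Wminus s < x ∧ x < Wplus s then 1 else 0))
        * (1 - Real.sqrt (x / s)))
  + curveMeasure (fun x => Lplus x s)
      (fun x =>
        ((if s ≤ 1 ∧ 1 - s < x then 1 else 0)
          + (if 1 < s ∧ Wminus s < x ∧ x < Wplus s then 1 else 0))
        * (1 - Real.sqrt ((1 - x) / s)))


open Set ENNReal

section Tools

variable {s : ℝ} (hs0 : 0 < s)

include hs0

lemma Lminus_eq_sq {x : ℝ} (hx : 0 ≤ x) :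
    Lminus x s = (Real.sqrt s - Real.sqrt x) ^ 2 := by
  have h1 : Real.sqrt s ^ 2 = s := Real.sq_sqrt hs0.le
  have h2 : Real.sqrt x ^ 2 = x := Real.sq_sqrt hx
  unfold Lminus
  rw [Real.sqrt_mul hs0.le]
  nlinarith [h1, h2]

lemma sqrt_Lminus {x : ℝ} (hx : 0 ≤ x) (hxs : x ≤ s) :
    Real.sqrt (Lminus x s) = Real.sqrt s - Real.sqrt x := by
  rw [Lminus_eq_sq hs0 hx, Real.sqrt_sq (sub_nonneg.2 (Real.sqrt_le_sqrt hxs))]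

lemma Lminus_invol {x : ℝ} (hx : 0 ≤ x) (hxs : x ≤ s) :
    Lminus (Lminus x s) s = x := by
  have h0 : 0 ≤ Lminus x s := by
    rw [Lminus_eq_sq hs0 hx]; positivity
  have h1 : Real.sqrt s ^ 2 = s := Real.sq_sqrt hs0.le
  have h2 : Real.sqrt x ^ 2 = x := Real.sq_sqrt hx
  have h3 := sqrt_Lminus hs0 hx hxs
  calc Lminus (Lminus x s) s
      = Lminus x s + s - 2 * (Real.sqrt s * Real.sqrt (Lminus x s)) := by
        rw [show Lminus (Lminus x s) s
            = Lminus x s + s - 2 * Real.sqrt (s * Lminus x s) from rfl,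
          Real.sqrt_mul hs0.le]
    _ = x := by
        rw [h3]; unfold Lminus; rw [Real.sqrt_mul hs0.le]; nlinarith [h1, h2]

lemma Lminus_strictAntiOn : StrictAntiOn (fun x => Lminus x s) (Icc 0 s) := by
  intro x hx y hy hxy
  have h1 : Real.sqrt s ^ 2 = s := Real.sq_sqrt hs0.le
  have h2 : Real.sqrt x ^ 2 = x := Real.sq_sqrt hx.1
  have h3 : Real.sqrt y ^ 2 = y := Real.sq_sqrt (hx.1.trans hxy.le)
  have h4 : Real.sqrt x < Real.sqrt y := Real.sqrt_lt_sqrt hx.1 hxy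
  have h5 : Real.sqrt y ≤ Real.sqrt s := Real.sqrt_le_sqrt hy.2
  have h6 : Real.sqrt x < Real.sqrt s := Real.sqrt_lt_sqrt hx.1 (lt_of_lt_of_le hxy hy.2)
  have key : 0 < (Real.sqrt y - Real.sqrt x) * (2 * Real.sqrt s - Real.sqrt y - Real.sqrt x) :=
    mul_pos (by linarith) (by linarith)
  simp only [Lminus]
  rw [Real.sqrt_mul hs0.le, Real.sqrt_mul hs0.le]
  nlinarith [key, h1, h2, h3]

omit hs0 in
lemma Lminus_zero : Lminus 0 s = s := by simp [Lminus]

lemma Lminus_self : Lminus s s = 0 := by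
  unfold Lminus; rw [Real.sqrt_mul_self hs0.le]; ring

lemma hasDerivAt_Lminus {x : ℝ} (hx : 0 < x) :
    HasDerivAt (fun y => Lminus y s) (1 - Real.sqrt s / Real.sqrt x) x := by
  have hfun : (fun y => Lminus y s) = fun y => y + s - 2 * Real.sqrt s * Real.sqrt y := by
    funext y; unfold Lminus; rw [Real.sqrt_mul hs0.le]; ring
  rw [hfun]
  have h1 : HasDerivAt (fun y : ℝ => Real.sqrt y) (1 / (2 * Real.sqrt x)) x :=
    Real.hasDerivAt_sqrt hx.ne'
  have h2 := (h1.const_mul (2 * Real.sqrt s)).const_add s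
  have h3 := ((hasDerivAt_id x).add_const s).sub (h1.const_mul (2 * Real.sqrt s))
  have hne : Real.sqrt x ≠ 0 := (Real.sqrt_pos.2 hx).ne'
  have hd : 1 - Real.sqrt s / Real.sqrt x = 1 - 2 * Real.sqrt s * (1 / (2 * Real.sqrt x)) := by
    field_simp
  rw [hd]; exact h3
end Tools

section Wfacts

variable {s : ℝ} (hs1 : 1 < s) (hs2 : s ≤ 2)

lemma Wm_eq (s : ℝ) : Wminus s = 1 - Wplus s := by unfold Wminus Wplus; ring

include hs1 hs2

lemma q_sq : Real.sqrt (2 * s - s ^ 2) ^ 2 = 2 * s - s ^ 2 :=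
  Real.sq_sqrt (by nlinarith)

lemma q_le_one : Real.sqrt (2 * s - s ^ 2) ≤ 1 :=
  Real.sqrt_le_one.mpr (by nlinarith)

lemma q_le_s : Real.sqrt (2 * s - s ^ 2) ≤ s := by
  nlinarith [q_sq hs1 hs2, Real.sqrt_nonneg (2 * s - s ^ 2)]

lemma Wm_nonneg : 0 ≤ Wminus s := by
  have := q_le_one hs1 hs2; unfold Wminus; linarith

lemma Wp_le_one : Wplus s ≤ 1 := by
  have := q_le_one hs1 hs2; unfold Wplus; linarith

omit hs1 hs2 in
lemma Wm_le_Wp : Wminus s ≤ Wplus s := by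
  have := Real.sqrt_nonneg (2 * s - s ^ 2); unfold Wminus Wplus; linarith

lemma sqrt_sWp : Real.sqrt (s * Wplus s) = (s + Real.sqrt (2 * s - s ^ 2)) / 2 := by
  have hq := q_sq hs1 hs2
  have hq0 := Real.sqrt_nonneg (2 * s - s ^ 2)
  have h : s * Wplus s = ((s + Real.sqrt (2 * s - s ^ 2)) / 2) ^ 2 := by
    unfold Wplus; nlinarith [hq]
  rw [h, Real.sqrt_sq (by nlinarith)]

lemma sqrt_sWm : Real.sqrt (s * Wminus s) = (s - Real.sqrt (2 * s - s ^ 2)) / 2 := by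
  have hq := q_sq hs1 hs2
  have hq0 := Real.sqrt_nonneg (2 * s - s ^ 2)
  have hqs := q_le_s hs1 hs2
  have h : s * Wminus s = ((s - Real.sqrt (2 * s - s ^ 2)) / 2) ^ 2 := by
    unfold Wminus; nlinarith [hq]
  rw [h, Real.sqrt_sq (by nlinarith)]

lemma Lminus_Wp : Lminus (Wplus s) s = Wminus s := by
  unfold Lminus; rw [sqrt_sWp hs1 hs2]; unfold Wplus Wminus; ring

lemma Lminus_Wm : Lminus (Wminus s) s = Wplus s := by
  unfold Lminus; rw [sqrt_sWm hs1 hs2]; unfold Wplus Wminus; ring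

end Wfacts

open Classical in
noncomputable def wm (s : ℝ) : ℝ → ℝ := fun x =>
  ((if s ≤ 1 ∧ x < s then 1 else 0)
    + (if 1 < s ∧ Wminus s < x ∧ x < Wplus s then 1 else 0))
  * (1 - Real.sqrt (x / s))

lemma continuous_Lminus (s : ℝ) : Continuous fun x => Lminus x s := by
  unfold Lminus
  exact (continuous_id.add continuous_const).sub
    (continuous_const.mul (Real.continuous_sqrt.comp (continuous_const.mul continuous_id)))

lemma measurable_wm (s : ℝ) : Measurable (wm s) := by
  unfold wm
  apply Measurable.mul
  · apply Measurable.add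
    · apply Measurable.ite _ measurable_const measurable_const
      by_cases h : s ≤ 1
      · simp only [h, true_and]; exact measurableSet_Iio
      · simp only [h, false_and, setOf_false]; exact MeasurableSet.empty
    · apply Measurable.ite _ measurable_const measurable_const
      by_cases h : 1 < s
      · simp only [h, true_and]; exact measurableSet_Ioo
      · simp only [h, false_and, setOf_false]; exact MeasurableSet.empty
  · exact measurable_const.sub
      (Real.continuous_sqrt.measurable.comp (measurable_id.div_const s))

lemma map_withDensity' {α β : Type*} [MeasurableSpace α] [MeasurableSpace β]
    (μ : Measure α) {f : α → β} (hf : Measurable f) {g : β → ℝ≥0∞} (hg : Measurable g) :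
    Measure.map f (μ.withDensity (g ∘ f)) = (Measure.map f μ).withDensity g := by
  ext t ht
  rw [Measure.map_apply hf ht, withDensity_apply _ (hf ht), withDensity_apply _ ht,
    Measure.restrict_map hf ht, lintegral_map hg hf]
  rfl

lemma map_wd_deriv {S : Set ℝ} (hS : MeasurableSet S) {f f' : ℝ → ℝ}
    (hf' : ∀ x ∈ S, HasDerivWithinAt f (f' x) S x) (hinj : Set.InjOn f S) (hm : Measurable f) :
    Measure.map f ((volume.restrict S).withDensity fun x => ENNReal.ofReal |f' x|) =
      volume.restrict (f '' S) := by
  have := MeasureTheory.map_withDensity_abs_det_fderiv_eq_addHaar volume hS.nullMeasurableSet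
    (f' := fun x => ContinuousLinearMap.smulRight (1 : ℝ →L[ℝ] ℝ) (f' x))
    (fun x hx => (hf' x hx).hasFDerivWithinAt) hinj
  simpa [ContinuousLinearMap.smulRight_one_eq_toSpanSingleton, ContinuousLinearMap.det_toSpanSingleton] using this

section CoreLemmas

variable {s : ℝ} (hs0 : 0 < s)


include hs0

lemma core_map_phi {a b : ℝ} (ha0 : 0 ≤ a) (hbs : b ≤ s)
    (hfa : Lminus a s = b) (hfb : Lminus b s = a)
    (hw : ∀ x ∈ Ioo a b, wm s x = 1 - Real.sqrt x / Real.sqrt s) :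
    Measure.map (fun x => Lminus x s)
        ((volume.restrict (Ioo a b)).withDensity fun x => ENNReal.ofReal (wm s x))
      = (volume.restrict (Ioo a b)).withDensity fun x => ENNReal.ofReal (wm s x) := by
  have hsub : Ioo a b ⊆ Icc 0 s := fun x hx => ⟨ha0.trans hx.1.le, hx.2.le.trans hbs⟩
  have hmapsTo : ∀ x ∈ Ioo a b, Lminus x s ∈ Ioo a b := by
    intro x hx
    have hb : b ∈ Icc (0:ℝ) s := ⟨le_trans ha0 (le_trans hx.1.le hx.2.le), hbs⟩
    have ha : a ∈ Icc (0:ℝ) s := ⟨ha0, le_trans hx.1.le (hx.2.le.trans hbs)⟩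
    constructor
    · rw [← hfb]; exact Lminus_strictAntiOn hs0 (hsub hx) hb hx.2
    · rw [← hfa]; exact Lminus_strictAntiOn hs0 ha (hsub hx) hx.1
  have hinv : ∀ x ∈ Ioo a b, Lminus (Lminus x s) s = x := fun x hx =>
    Lminus_invol hs0 (hsub hx).1 (hsub hx).2
  have himg : (fun x => Lminus x s) '' Ioo a b = Ioo a b :=
    subset_antisymm (image_subset_iff.2 hmapsTo)
      (fun y hy => ⟨Lminus y s, hmapsTo y hy, hinv y hy⟩)
  have hφm : Measurable fun x => Lminus x s := (continuous_Lminus s).measurable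
  have hinj : InjOn (fun x => Lminus x s) (Ioo a b) := by
    intro x hx y hy h
    have h2 := congrArg (fun z => Lminus z s) h
    simp only at h2
    rwa [hinv x hx, hinv y hy] at h2
  set d : ℝ → ℝ := fun x => 1 - Real.sqrt s / Real.sqrt x with hd
  have hder : ∀ x ∈ Ioo a b, HasDerivWithinAt (fun y => Lminus y s) (d x) (Ioo a b) x :=
    fun x hx => (hasDerivAt_Lminus hs0 (lt_of_le_of_lt ha0 hx.1)).hasDerivWithinAt
  have hdens : ∀ x ∈ Ioo a b,
      ENNReal.ofReal (wm s x) = ENNReal.ofReal |d x| * ENNReal.ofReal (wm s (Lminus x s)) := by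
    intro x hx
    have hx0 : 0 < x := lt_of_le_of_lt ha0 hx.1
    have hxs : x < s := lt_of_lt_of_le hx.2 hbs
    have hsx : Real.sqrt x < Real.sqrt s := Real.sqrt_lt_sqrt hx0.le hxs
    have hsx0 : 0 < Real.sqrt x := Real.sqrt_pos.2 hx0
    have hss0 : 0 < Real.sqrt s := Real.sqrt_pos.2 hs0
    have hgt1 : 1 < Real.sqrt s / Real.sqrt x := (one_lt_div hsx0).2 hsx
    have habs : |d x| = Real.sqrt s / Real.sqrt x - 1 := by
      rw [abs_of_neg (by simp only [hd]; linarith)]; simp only [hd]; ring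
    have hwφ : wm s (Lminus x s) = Real.sqrt x / Real.sqrt s := by
      rw [hw _ (hmapsTo x hx), sqrt_Lminus hs0 hx0.le hxs.le]
      field_simp
      ring
    rw [habs, hw x hx, hwφ, ← ENNReal.ofReal_mul (by linarith)]
    congr 1
    field_simp
  have hmeas_wm : Measurable fun x => ENNReal.ofReal (wm s x) :=
    ENNReal.measurable_ofReal.comp (measurable_wm s)
  have hmeas_d : Measurable fun x => ENNReal.ofReal |d x| := by
    apply ENNReal.measurable_ofReal.comp
    apply Measurable.abs
    exact measurable_const.sub
      (measurable_const.div (Real.continuous_sqrt.measurable.comp measurable_id))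
  calc Measure.map (fun x => Lminus x s)
        ((volume.restrict (Ioo a b)).withDensity fun x => ENNReal.ofReal (wm s x))
      = Measure.map (fun x => Lminus x s) ((volume.restrict (Ioo a b)).withDensity
          ((fun x => ENNReal.ofReal |d x|)
            * ((fun x => ENNReal.ofReal (wm s x)) ∘ (fun x => Lminus x s)))) := by
        congr 1
        apply withDensity_congr_ae
        rw [Filter.EventuallyEq, ae_restrict_iff' measurableSet_Ioo]
        exact Filter.Eventually.of_forall fun x hx => hdens x hx
    _ = Measure.map (fun x => Lminus x s)
          (((volume.restrict (Ioo a b)).withDensity fun x => ENNReal.ofReal |d x|).withDensity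
            ((fun x => ENNReal.ofReal (wm s x)) ∘ (fun x => Lminus x s))) := by
        rw [withDensity_mul _ hmeas_d (hmeas_wm.comp hφm)]
    _ = (Measure.map (fun x => Lminus x s)
          ((volume.restrict (Ioo a b)).withDensity fun x => ENNReal.ofReal |d x|)).withDensity
            (fun x => ENNReal.ofReal (wm s x)) :=
        map_withDensity' _ hφm hmeas_wm
    _ = (volume.restrict ((fun x => Lminus x s) '' Ioo a b)).withDensity
          (fun x => ENNReal.ofReal (wm s x)) := by
        rw [map_wd_deriv measurableSet_Ioo hder hinj hφm]
    _ = _ := by rw [himg]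

omit hs0 in
lemma core_rho_eq {a b : ℝ} (hsub : Ioo a b ⊆ Icc 0 1)
    (hz : ∀ x ∈ Icc (0:ℝ) 1, x ∉ Ioo a b → x = a ∨ x = b ∨ wm s x = 0) :
    (volume.restrict (Icc (0:ℝ) 1)).withDensity (fun x => ENNReal.ofReal (wm s x))
      = (volume.restrict (Ioo a b)).withDensity fun x => ENNReal.ofReal (wm s x) := by
  rw [← withDensity_indicator measurableSet_Icc, ← withDensity_indicator measurableSet_Ioo]
  apply withDensity_congr_ae
  have hnull : volume ({a, b} : Set ℝ) = 0 :=
    Set.Finite.measure_zero (Set.toFinite _) volume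
  refine ae_iff.2 (measure_mono_null ?_ hnull)
  intro x hx
  simp only [mem_setOf_eq] at hx
  by_cases hIoo : x ∈ Ioo a b
  · exact absurd (by rw [indicator_of_mem hIoo, indicator_of_mem (hsub hIoo)]) hx
  by_cases hIcc : x ∈ Icc (0:ℝ) 1
  · rcases hz x hIcc hIoo with h | h | h
    · simp [h]
    · simp [h]
    · exfalso
      apply hx
      rw [indicator_of_mem hIcc, indicator_of_notMem hIoo, h]
      simp
  · exact absurd (by rw [indicator_of_notMem hIoo, indicator_of_notMem hIcc]) hx

end CoreLemmas

open Classical in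
noncomputable def wp (s : ℝ) : ℝ → ℝ := fun x =>
  ((if s ≤ 1 ∧ 1 - s < x then 1 else 0)
    + (if 1 < s ∧ Wminus s < x ∧ x < Wplus s then 1 else 0))
  * (1 - Real.sqrt ((1 - x) / s))

open Classical in
noncomputable def wd (s : ℝ) : ℝ → ℝ := fun x =>
  if 1 < s ∧ ¬(Wminus s < x ∧ x < Wplus s) then 1 else 0

open Classical in
noncomputable def Fac (s : ℝ) : ℝ × ℝ → ℝ≥0∞ := fun p =>
  ENNReal.ofReal
    (if Lminus p.1 s < p.2 ∧ p.2 < Lplus p.1 s ∧ p.1 - s < p.2 ∧ p.2 < p.1 + s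
     then 1 / (2 * s) else 0)

lemma kappa_eq (s : ℝ) :
    kappa s = (volume : Measure (ℝ × ℝ)).withDensity (Fac s)
      + curveMeasure (fun x => 1 - x) (wd s)
      + curveMeasure (fun x => Lminus x s) (wm s)
      + curveMeasure (fun x => Lplus x s) (wp s) := rfl

-- measure preserving maps
lemma mp_e : MeasurePreserving (fun x : ℝ => 1 - x) volume volume :=
  Measure.measurePreserving_sub_left volume 1

lemma mp_R : MeasurePreserving (fun p : ℝ × ℝ => (1 - p.1, 1 - p.2)) volume volume := by
  rw [show (volume : Measure (ℝ × ℝ)) = Measure.prod volume volume from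
    (Measure.volume_eq_prod ℝ ℝ)]
  exact mp_e.prod mp_e

lemma mp_T : MeasurePreserving (fun p : ℝ × ℝ => (p.2, p.1)) volume volume := by
  rw [show (volume : Measure (ℝ × ℝ)) = Measure.prod volume volume from
    (Measure.volume_eq_prod ℝ ℝ)]
  exact Measure.measurePreserving_swap

lemma map_e_restrict :
    Measure.map (fun x : ℝ => 1 - x) (volume.restrict (Icc 0 1)) = volume.restrict (Icc 0 1) := by
  have hpre : (fun x : ℝ => 1 - x) ⁻¹' Icc 0 1 = Icc 0 1 := by
    ext x
    simp only [mem_preimage, mem_Icc]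
    constructor <;> rintro ⟨h1, h2⟩ <;> constructor <;> linarith
  conv_rhs => rw [← mp_e.map_eq]
  rw [Measure.restrict_map mp_e.measurable measurableSet_Icc, hpre]


lemma map_e_withDensity (w : ℝ → ℝ) (hw : Measurable w) :
    Measure.map (fun x : ℝ => 1 - x)
        ((volume.restrict (Icc 0 1)).withDensity fun x => ENNReal.ofReal (w x)) =
      (volume.restrict (Icc 0 1)).withDensity fun x => ENNReal.ofReal (w (1 - x)) := by
  have h1 : (fun x => ENNReal.ofReal (w x))
      = (fun x => ENNReal.ofReal (w (1 - x))) ∘ (fun x : ℝ => 1 - x) := by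
    funext x; simp [sub_sub_cancel]
  have hgm : Measurable fun x : ℝ => ENNReal.ofReal (w (1 - x)) :=
    ENNReal.measurable_ofReal.comp (hw.comp (measurable_const.sub measurable_id))
  rw [h1, map_withDensity' (g := fun x : ℝ => ENNReal.ofReal (w (1 - x)))
    _ mp_e.measurable hgm, map_e_restrict]

lemma map_R_curve {g w : ℝ → ℝ} (hg : Measurable g) (hw : Measurable w) :
    Measure.map (fun p : ℝ × ℝ => (1 - p.1, 1 - p.2)) (curveMeasure g w) =
      curveMeasure (fun x => 1 - g (1 - x)) (fun x => w (1 - x)) := by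
  unfold curveMeasure
  have hm1 : Measurable fun x : ℝ => (x, g x) := measurable_id.prodMk hg
  have hm2 : Measurable fun x : ℝ => (x, 1 - g (1 - x)) :=
    measurable_id.prodMk ((measurable_const.sub hg).comp (measurable_const.sub measurable_id))
  rw [Measure.map_map mp_R.measurable hm1,
    ← map_e_withDensity w hw,
    Measure.map_map hm2 mp_e.measurable]
  congr 1
  funext x
  show (1 - x, 1 - g x) = (1 - x, 1 - g (1 - (1 - x)))
  rw [show (1:ℝ) - (1 - x) = x from by ring]

lemma Lminus_reflect (s x : ℝ) : Lminus (1 - x) s = 1 - Lplus x s := by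
  unfold Lminus Lplus; ring

lemma Lplus_reflect (s x : ℝ) : Lplus (1 - x) s = 1 - Lminus x s := by
  unfold Lminus Lplus
  rw [show s * (1 - (1 - x)) = s * x from by ring]
  ring

lemma Wm_eq' (s : ℝ) : Wminus s = 1 - Wplus s := by unfold Wminus Wplus; ring

lemma wm_reflect (s x : ℝ) : wm s (1 - x) = wp s x := by
  unfold wm wp
  have hW := Wm_eq' s
  have h1 : (if s ≤ 1 ∧ 1 - x < s then (1:ℝ) else 0)
      = if s ≤ 1 ∧ 1 - s < x then (1:ℝ) else 0 :=
    if_congr (and_congr_right fun _ => ⟨fun h => by linarith, fun h => by linarith⟩) rfl rfl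
  have h2 : (if 1 < s ∧ Wminus s < 1 - x ∧ 1 - x < Wplus s then (1:ℝ) else 0)
      = if 1 < s ∧ Wminus s < x ∧ x < Wplus s then (1:ℝ) else 0 :=
    if_congr (and_congr_right fun _ =>
      ⟨fun h => ⟨by linarith [h.2], by linarith [h.1]⟩,
       fun h => ⟨by linarith [h.2], by linarith [h.1]⟩⟩) rfl rfl
  rw [h1, h2]

lemma wp_reflect (s x : ℝ) : wp s (1 - x) = wm s x := by
  rw [← wm_reflect s (1 - x), show (1:ℝ) - (1 - x) = x from by ring]

lemma wd_reflect (s x : ℝ) : wd s (1 - x) = wd s x := by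
  unfold wd
  have hW := Wm_eq' s
  exact if_congr (and_congr_right fun _ => not_congr
    ⟨fun h => ⟨by linarith [h.2], by linarith [h.1]⟩,
     fun h => ⟨by linarith [h.2], by linarith [h.1]⟩⟩) rfl rfl

lemma measurable_wp (s : ℝ) : Measurable (wp s) := by
  unfold wp
  apply Measurable.mul
  · apply Measurable.add
    · apply Measurable.ite _ measurable_const measurable_const
      by_cases h : s ≤ 1
      · simp only [h, true_and]; exact measurableSet_Ioi
      · simp only [h, false_and, setOf_false]; exact MeasurableSet.empty
    · apply Measurable.ite _ measurable_const measurable_const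
      by_cases h : 1 < s
      · simp only [h, true_and]; exact measurableSet_Ioo
      · simp only [h, false_and, setOf_false]; exact MeasurableSet.empty
  · exact measurable_const.sub
      (Real.continuous_sqrt.measurable.comp ((measurable_const.sub measurable_id).div_const s))

lemma measurable_wd (s : ℝ) : Measurable (wd s) := by
  unfold wd
  apply Measurable.ite _ measurable_const measurable_const
  by_cases h : 1 < s
  · simp only [h, true_and]
    exact (measurableSet_Ioo (a := Wminus s) (b := Wplus s)).compl
  · simp only [h, false_and, setOf_false]; exact MeasurableSet.empty

lemma continuous_Lplus (s : ℝ) : Continuous fun x => Lplus x s := by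
  unfold Lplus
  exact (continuous_id.sub continuous_const).add
    (continuous_const.mul (Real.continuous_sqrt.comp
      (continuous_const.mul (continuous_const.sub continuous_id))))


lemma measurable_Fac (s : ℝ) : Measurable (Fac s) := by
  unfold Fac
  apply ENNReal.measurable_ofReal.comp
  apply Measurable.ite _ measurable_const measurable_const
  have h1 : MeasurableSet {p : ℝ × ℝ | Lminus p.1 s < p.2} :=
    measurableSet_lt ((continuous_Lminus s).measurable.comp measurable_fst) measurable_snd
  have h2 : MeasurableSet {p : ℝ × ℝ | p.2 < Lplus p.1 s} :=
    measurableSet_lt measurable_snd ((continuous_Lplus s).measurable.comp measurable_fst)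
  have h3 : MeasurableSet {p : ℝ × ℝ | p.1 - s < p.2} :=
    measurableSet_lt (measurable_fst.sub measurable_const) measurable_snd
  have h4 : MeasurableSet {p : ℝ × ℝ | p.2 < p.1 + s} :=
    measurableSet_lt measurable_snd (measurable_fst.add measurable_const)
  exact h1.inter (h2.inter (h3.inter h4))

lemma Cswap {s x y : ℝ} (hs0 : 0 < s)
    (h : Lminus x s < y ∧ y < Lplus x s ∧ x - s < y ∧ y < x + s) :
    Lminus y s < x ∧ x < Lplus y s ∧ y - s < x ∧ x < y + s := by
  obtain ⟨h1, h2, h3, h4⟩ := h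
  unfold Lminus Lplus at *
  have hx0 : 0 < x := by
    by_contra hc
    push_neg at hc
    rw [Real.sqrt_eq_zero'.2 (by nlinarith : s * x ≤ 0)] at h1
    linarith
  have hx1 : x < 1 := by
    by_contra hc
    push_neg at hc
    rw [Real.sqrt_eq_zero'.2 (by nlinarith : s * (1 - x) ≤ 0)] at h2
    linarith
  have e2 : (x + s - y) ^ 2 < 4 * (s * x) := by
    have hpos : 0 < x + s - y := by linarith
    have hlt : x + s - y < 2 * Real.sqrt (s * x) := by linarith
    nlinarith [Real.sq_sqrt (le_of_lt (mul_pos hs0 hx0)), Real.sqrt_nonneg (s * x)]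
  have e4 : (y - x + s) ^ 2 < 4 * (s * (1 - x)) := by
    have hpos : 0 < y - x + s := by linarith
    have hlt : y - x + s < 2 * Real.sqrt (s * (1 - x)) := by linarith
    nlinarith [Real.sq_sqrt (le_of_lt (mul_pos hs0 (by linarith : (0:ℝ) < 1 - x))),
      Real.sqrt_nonneg (s * (1 - x))]
  have g2 : (y + s - x) ^ 2 < 4 * (s * y) := by nlinarith [e2]
  have hy0 : 0 < y := by nlinarith [sq_nonneg (y + s - x)]
  have g4 : (x - y + s) ^ 2 < 4 * (s * (1 - y)) := by nlinarith [e4]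
  have hy1 : y < 1 := by nlinarith [sq_nonneg (x - y + s)]
  refine ⟨?_, ?_, by linarith, by linarith⟩
  · have hq : Real.sqrt (s * y) ^ 2 = s * y := Real.sq_sqrt (by positivity)
    have hqn : 0 ≤ Real.sqrt (s * y) := Real.sqrt_nonneg _
    nlinarith [g2, hq, hqn]
  · have hq : Real.sqrt (s * (1 - y)) ^ 2 = s * (1 - y) := Real.sq_sqrt (by nlinarith)
    have hqn := Real.sqrt_nonneg (s * (1 - y))
    nlinarith [g4, hq, hqn]


lemma Fac_R (s : ℝ) (p : ℝ × ℝ) : Fac s (1 - p.1, 1 - p.2) = Fac s p := by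
  unfold Fac
  congr 1
  apply if_congr _ rfl rfl
  rw [Lminus_reflect, Lplus_reflect]
  dsimp only
  constructor
  · rintro ⟨a, b, c, d⟩; exact ⟨by linarith, by linarith, by linarith, by linarith⟩
  · rintro ⟨a, b, c, d⟩; exact ⟨by linarith, by linarith, by linarith, by linarith⟩

lemma Fac_T {s : ℝ} (hs0 : 0 < s) (p : ℝ × ℝ) : Fac s (p.2, p.1) = Fac s p := by
  unfold Fac
  congr 1
  dsimp only
  exact if_congr ⟨fun h => Cswap hs0 h, fun h => Cswap hs0 h⟩ rfl rfl

lemma refl_A {s : ℝ} :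
    Measure.map (fun p : ℝ × ℝ => (1 - p.1, 1 - p.2)) (volume.withDensity (Fac s))
      = volume.withDensity (Fac s) := by
  have h : Fac s = Fac s ∘ (fun p : ℝ × ℝ => (1 - p.1, 1 - p.2)) :=
    funext fun p => (Fac_R s p).symm
  conv_lhs => rw [h]
  rw [map_withDensity' _ mp_R.measurable (measurable_Fac s), mp_R.map_eq]

lemma swap_A {s : ℝ} (hs0 : 0 < s) :
    Measure.map (fun p : ℝ × ℝ => (p.2, p.1)) (volume.withDensity (Fac s))
      = volume.withDensity (Fac s) := by
  have h : Fac s = Fac s ∘ (fun p : ℝ × ℝ => (p.2, p.1)) :=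
    funext fun p => (Fac_T hs0 p).symm
  conv_lhs => rw [h]
  rw [map_withDensity' _ mp_T.measurable (measurable_Fac s), mp_T.map_eq]

lemma exists_ab {s : ℝ} (hs0 : 0 < s) (hs2 : s ≤ 2) :
    ∃ a b : ℝ, 0 ≤ a ∧ b ≤ s ∧ Ioo a b ⊆ Icc 0 1 ∧ Lminus a s = b ∧ Lminus b s = a
      ∧ (∀ x ∈ Ioo a b, wm s x = 1 - Real.sqrt x / Real.sqrt s)
      ∧ (∀ x ∈ Icc (0:ℝ) 1, x ∉ Ioo a b → x = a ∨ x = b ∨ wm s x = 0) := by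
  rcases le_or_gt s 1 with hs1 | hs1
  · refine ⟨0, s, le_refl _, le_refl _, fun x hx => ⟨hx.1.le, hx.2.le.trans hs1⟩,
      Lminus_zero, Lminus_self hs0, ?_, ?_⟩
    · intro x hx
      unfold wm
      rw [if_pos ⟨hs1, hx.2⟩, if_neg (fun hcon => absurd hs1 (not_le.2 hcon.1)),
        Real.sqrt_div hx.1.le]
      ring
    · intro x hx hxI
      rcases eq_or_lt_of_le hx.1 with h0 | h0
      · exact Or.inl h0.symm
      rcases eq_or_ne x s with hxs | hxs
      · exact Or.inr (Or.inl hxs)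
      right; right
      have hsx : ¬ x < s := fun hc => hxI ⟨h0, hc⟩
      unfold wm
      rw [if_neg (fun hcon => hsx hcon.2), if_neg (fun hcon => absurd hs1 (not_le.2 hcon.1))]
      ring
  · refine ⟨Wminus s, Wplus s, Wm_nonneg hs1 hs2, (Wp_le_one hs1 hs2).trans hs1.le,
      fun x hx => ⟨(Wm_nonneg hs1 hs2).trans hx.1.le, hx.2.le.trans (Wp_le_one hs1 hs2)⟩,
      Lminus_Wm hs1 hs2, Lminus_Wp hs1 hs2, ?_, ?_⟩
    · intro x hx
      unfold wm
      rw [if_neg (fun hcon => absurd hcon.1 (not_le.2 hs1)), if_pos ⟨hs1, hx.1, hx.2⟩,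
        Real.sqrt_div ((Wm_nonneg hs1 hs2).trans hx.1.le) s]
      ring
    · intro x hx hxI
      right; right
      unfold wm
      rw [if_neg (fun hcon => absurd hcon.1 (not_le.2 hs1)),
        if_neg (fun hcon => hxI ⟨hcon.2.1, hcon.2.2⟩)]
      ring

lemma swap_M {s : ℝ} (hs0 : 0 < s) (hs2 : s ≤ 2) :
    Measure.map (fun p : ℝ × ℝ => (p.2, p.1)) (curveMeasure (fun x => Lminus x s) (wm s))
      = curveMeasure (fun x => Lminus x s) (wm s) := by
  obtain ⟨a, b, ha0, hbs, hsub, hfa, hfb, hw, hz⟩ := exists_ab hs0 hs2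
  have hrho := core_rho_eq (s := s) hsub hz
  have hmap := core_map_phi hs0 ha0 hbs hfa hfb hw
  have hφm : Measurable fun x => Lminus x s := (continuous_Lminus s).measurable
  have hm1 : Measurable fun x : ℝ => (x, Lminus x s) := measurable_id.prodMk hφm
  have hinv : ∀ x ∈ Ioo a b, Lminus (Lminus x s) s = x := fun x hx =>
    Lminus_invol hs0 (ha0.trans hx.1.le) (hx.2.le.trans hbs)
  unfold curveMeasure
  rw [Measure.map_map mp_T.measurable hm1, hrho]
  have hae : ∀ᵐ x ∂((volume.restrict (Ioo a b)).withDensity fun x => ENNReal.ofReal (wm s x)),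
      x ∈ Ioo a b :=
    (withDensity_absolutelyContinuous _ _).ae_le (ae_restrict_mem measurableSet_Ioo)
  have hcongr : ((fun p : ℝ × ℝ => (p.2, p.1)) ∘ fun x : ℝ => (x, Lminus x s))
      =ᵐ[(volume.restrict (Ioo a b)).withDensity fun x => ENNReal.ofReal (wm s x)]
      ((fun x : ℝ => (x, Lminus x s)) ∘ fun x => Lminus x s) := by
    filter_upwards [hae] with x hx
    show (Lminus x s, x) = (Lminus x s, Lminus (Lminus x s) s)
    rw [hinv x hx]
  rw [Measure.map_congr hcongr, ← Measure.map_map hm1 hφm, hmap, ← hrho]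

lemma refl_M {s : ℝ} :
    Measure.map (fun p : ℝ × ℝ => (1 - p.1, 1 - p.2))
        (curveMeasure (fun x => Lminus x s) (wm s))
      = curveMeasure (fun x => Lplus x s) (wp s) := by
  rw [map_R_curve (continuous_Lminus s).measurable (measurable_wm s)]
  rw [show (fun x : ℝ => 1 - (fun x => Lminus x s) (1 - x)) = fun x => Lplus x s from
      funext fun x => by simp only; rw [Lminus_reflect]; ring,
    show (fun x : ℝ => wm s (1 - x)) = wp s from funext fun x => wm_reflect s x]

lemma refl_P {s : ℝ} :
    Measure.map (fun p : ℝ × ℝ => (1 - p.1, 1 - p.2))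
        (curveMeasure (fun x => Lplus x s) (wp s))
      = curveMeasure (fun x => Lminus x s) (wm s) := by
  rw [map_R_curve (continuous_Lplus s).measurable (measurable_wp s)]
  rw [show (fun x : ℝ => 1 - (fun x => Lplus x s) (1 - x)) = fun x => Lminus x s from
      funext fun x => by simp only; rw [Lplus_reflect]; ring,
    show (fun x : ℝ => wp s (1 - x)) = wm s from funext fun x => wp_reflect s x]

lemma swap_P {s : ℝ} (hs0 : 0 < s) (hs2 : s ≤ 2) :
    Measure.map (fun p : ℝ × ℝ => (p.2, p.1)) (curveMeasure (fun x => Lplus x s) (wp s))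
      = curveMeasure (fun x => Lplus x s) (wp s) := by
  rw [← refl_M (s := s), Measure.map_map mp_T.measurable mp_R.measurable,
    show ((fun p : ℝ × ℝ => (p.2, p.1)) ∘ fun p : ℝ × ℝ => (1 - p.1, 1 - p.2))
      = ((fun p : ℝ × ℝ => (1 - p.1, 1 - p.2)) ∘ fun p : ℝ × ℝ => (p.2, p.1)) from rfl,
    ← Measure.map_map mp_R.measurable mp_T.measurable, swap_M hs0 hs2, refl_M]

lemma refl_D {s : ℝ} :
    Measure.map (fun p : ℝ × ℝ => (1 - p.1, 1 - p.2)) (curveMeasure (fun x => 1 - x) (wd s))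
      = curveMeasure (fun x => 1 - x) (wd s) := by
  rw [map_R_curve (show Measurable fun x : ℝ => 1 - x from measurable_const.sub measurable_id)
    (measurable_wd s)]
  rw [show (fun x : ℝ => 1 - (fun x : ℝ => 1 - x) (1 - x)) = fun x : ℝ => 1 - x from
      funext fun x => by simp only; ring,
    show (fun x : ℝ => wd s (1 - x)) = wd s from funext fun x => wd_reflect s x]

lemma swap_D {s : ℝ} :
    Measure.map (fun p : ℝ × ℝ => (p.2, p.1)) (curveMeasure (fun x => 1 - x) (wd s))
      = curveMeasure (fun x => 1 - x) (wd s) := by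
  unfold curveMeasure
  have hm1 : Measurable fun x : ℝ => (x, 1 - x) :=
    measurable_id.prodMk (measurable_const.sub measurable_id)
  rw [Measure.map_map mp_T.measurable hm1,
    show ((fun p : ℝ × ℝ => (p.2, p.1)) ∘ fun x : ℝ => (x, 1 - x))
      = ((fun x : ℝ => (x, 1 - x)) ∘ fun x : ℝ => 1 - x) from funext fun x => by
        show ((1:ℝ) - x, x) = (1 - x, 1 - (1 - x))
        rw [show (1:ℝ) - (1 - x) = x from by ring],
    ← Measure.map_map hm1 mp_e.measurable, map_e_withDensity _ (measurable_wd s),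
    show (fun x : ℝ => ENNReal.ofReal (wd s (1 - x))) = fun x => ENNReal.ofReal (wd s x) from
      funext fun x => by rw [wd_reflect]]

/-- Symmetry of the limiting configuration measure (stated after Theorem 1.3): for
`0 < s ≤ 2`, the measure `κ_s` is invariant under the point reflection
`(x, y) ↦ (1-x, 1-y)` and under the transposition `(x, y) ↦ (y, x)`. -/
theorem kappa_symmetric (s : ℝ) (hs0 : 0 < s) (hs2 : s ≤ 2) :
    Measure.map (fun p : ℝ × ℝ => (1 - p.1, 1 - p.2)) (kappa s) = kappa s
    ∧ Measure.map (fun p : ℝ × ℝ => (p.2, p.1)) (kappa s) = kappa s := by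
  constructor
  · rw [kappa_eq, Measure.map_add _ _ mp_R.measurable, Measure.map_add _ _ mp_R.measurable,
      Measure.map_add _ _ mp_R.measurable, refl_A, refl_D, refl_M, refl_P]
    abel
  · rw [kappa_eq, Measure.map_add _ _ mp_T.measurable, Measure.map_add _ _ mp_T.measurable,
      Measure.map_add _ _ mp_T.measurable, swap_A hs0, swap_D, swap_M hs0 hs2, swap_P hs0 hs2]
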